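/- Let A(s) = (460 - 120π + 51s + 27s²)/120 and g₁(s) = A(s)²(1-s) - (1+s-A(s))². Then g₁(s) > 0 for all s ∈ [1/3, 2/3]. -/

import Mathlib

open Real

noncomputable def A (s : ℝ) : ℝ := (460 - 120 * π + 51 * s + 27 * s ^ 2) / 120

theorem g1_pos (s : ℝ) (hs : s ∈ Set.Icc (1/3 : ℝ) (2/3)) :
    A s ^ 2 * (1 - s) - (1 + s - A s) ^ 2 > 0 := by
  obtain ⟨h1, h2⟩ := hs
  have hp1 : π > 3.141592 := pi_gt_d6
  have hp2 : π < 3.141593 := pi_lt_d6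
  unfold A
  nlinarith [sq_nonneg (s - 2/3), sq_nonneg (s - 1/3), sq_nonneg s, sq_nonneg (π - 3.141592), mul_nonneg (sub_nonneg.2 h1) (sub_nonneg.2 h2), sq_nonneg (s*s - 1/3), mul_nonneg (mul_nonneg (sub_nonneg.2 h1) (sub_nonneg.2 h2)) (sub_nonneg.2 h2)]
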